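/- There is a number M > 0 such that for any three mutually orthogonal planes H_1, H_2, H_3 in ℝ³, the set Γ = {(t, t², t³) : t ≥ M} intersects the union H_1 ∪ H_2 ∪ H_3 in at most 6 points. -/

import Mathlib

open scoped InnerProductSpace

/-- The moment curve in `ℝ³`: `γ(t) = (t, t², t³)`. -/
noncomputable def momentCurve3 : ℝ → EuclideanSpace ℝ (Fin 3) :=
  fun t => WithLp.toLp 2 (fun i : Fin 3 => t ^ ((i : ℕ) + 1))

section helpers

lemma divdiff {a b c d x y : ℝ} (hxy : x ≠ y)
    (hx : a * x + b * x ^ 2 + c * x ^ 3 = d) (hy : a * y + b * y ^ 2 + c * y ^ 3 = d) :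
    a + b * (x + y) + c * (x ^ 2 + x * y + y ^ 2) = 0 := by
  have h : (x - y) * (a + b * (x + y) + c * (x ^ 2 + x * y + y ^ 2)) = 0 := by
    linear_combination hx - hy
  rcases mul_eq_zero.mp h with h' | h'
  · exact absurd (sub_eq_zero.mp h') hxy
  · exact h'

lemma vieta {a b c d x y z : ℝ} (hxy : x ≠ y) (hxz : x ≠ z) (hyz : y ≠ z)
    (hx : a * x + b * x ^ 2 + c * x ^ 3 = d) (hy : a * y + b * y ^ 2 + c * y ^ 3 = d)
    (hz : a * z + b * z ^ 2 + c * z ^ 3 = d) :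
    b = -c * (x + y + z) ∧ a = c * (x * y + x * z + y * z) := by
  have d1 := divdiff hxy hx hy
  have d2 := divdiff hxz hx hz
  have h : (y - z) * (b + c * (x + y + z)) = 0 := by linear_combination d1 - d2
  rcases mul_eq_zero.mp h with h' | h'
  · exact absurd (sub_eq_zero.mp h') hyz
  · exact ⟨by linarith [h'], by linear_combination d1 - (x + y) * h'⟩

lemma four_roots {a b c d x y z w : ℝ} (hxy : x ≠ y) (hxz : x ≠ z) (hxw : x ≠ w)
    (hyz : y ≠ z) (hyw : y ≠ w) (hzw : z ≠ w)
    (hx : a * x + b * x ^ 2 + c * x ^ 3 = d) (hy : a * y + b * y ^ 2 + c * y ^ 3 = d)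
    (hz : a * z + b * z ^ 2 + c * z ^ 3 = d) (hw : a * w + b * w ^ 2 + c * w ^ 3 = d) :
    a = 0 ∧ b = 0 ∧ c = 0 := by
  obtain ⟨h1, h2⟩ := vieta hxy hxz hyz hx hy hz
  obtain ⟨h1', h2'⟩ := vieta hxy hxw hyw hx hy hw
  have hc : c * (z - w) = 0 := by linear_combination h1 - h1'
  rcases mul_eq_zero.mp hc with h' | h'
  · subst h1; subst h2
    refine ⟨?_, ?_, h'⟩
    · linear_combination (x*y+x*z+y*z) * h'
    · linear_combination -(x+y+z) * h'
  · exact absurd (sub_eq_zero.mp h') hzw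

/-- Two orthonormal vectors cannot both have cubics with three roots `≥ 100`. -/
lemma noTwoTriples {u1 u2 u3 v1 v2 v3 cu cv r s q r' s' q' : ℝ}
    (hu : u1 ^ 2 + u2 ^ 2 + u3 ^ 2 = 1) (hv : v1 ^ 2 + v2 ^ 2 + v3 ^ 2 = 1)
    (huv : u1 * v1 + u2 * v2 + u3 * v3 = 0)
    (hr : 100 ≤ r) (hs : 100 ≤ s) (hq : 100 ≤ q)
    (hrs : r ≠ s) (hrq : r ≠ q) (hsq : s ≠ q)
    (hr' : 100 ≤ r') (hs' : 100 ≤ s') (hq' : 100 ≤ q')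
    (hrs' : r' ≠ s') (hrq' : r' ≠ q') (hsq' : s' ≠ q')
    (eur : u1 * r + u2 * r ^ 2 + u3 * r ^ 3 = cu)
    (eus : u1 * s + u2 * s ^ 2 + u3 * s ^ 3 = cu)
    (euq : u1 * q + u2 * q ^ 2 + u3 * q ^ 3 = cu)
    (evr : v1 * r' + v2 * r' ^ 2 + v3 * r' ^ 3 = cv)
    (evs : v1 * s' + v2 * s' ^ 2 + v3 * s' ^ 3 = cv)
    (evq : v1 * q' + v2 * q' ^ 2 + v3 * q' ^ 3 = cv) : False := by
  obtain ⟨hu2, hu1⟩ := vieta hrs hrq hsq eur eus euq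
  obtain ⟨hv2, hv1⟩ := vieta hrs' hrq' hsq' evr evs evq
  have hu3 : u3 ≠ 0 := by
    intro h; rw [h] at hu1 hu2; rw [hu1, hu2, h] at hu; norm_num at hu
  have hv3 : v3 ≠ 0 := by
    intro h; rw [h] at hv1 hv2; rw [hv1, hv2, h] at hv; norm_num at hv
  have key : (u3 * v3) * ((r * s + r * q + s * q) * (r' * s' + r' * q' + s' * q')
      + (r + s + q) * (r' + s' + q') + 1) = 0 := by
    rw [hu1, hu2, hv1, hv2] at huv; linear_combination huv
  rcases mul_eq_zero.mp key with h' | h'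
  · exact (mul_ne_zero hu3 hv3) h'
  · have hr0 : (0:ℝ) < r := by linarith
    have hs0 : (0:ℝ) < s := by linarith
    have hq0 : (0:ℝ) < q := by linarith
    have hr0' : (0:ℝ) < r' := by linarith
    have hs0' : (0:ℝ) < s' := by linarith
    have hq0' : (0:ℝ) < q' := by linarith
    have p1 : (0:ℝ) < r * s + r * q + s * q := by
      have := mul_pos hr0 hs0; have := mul_pos hr0 hq0; have := mul_pos hs0 hq0; linarith
    have p2 : (0:ℝ) < r' * s' + r' * q' + s' * q' := by
      have := mul_pos hr0' hs0'; have := mul_pos hr0' hq0'; have := mul_pos hs0' hq0'; linarith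
    have p3 : (0:ℝ) < r + s + q := by linarith
    have p4 : (0:ℝ) < r' + s' + q' := by linarith
    linarith [h', mul_pos p1 p2, mul_pos p3 p4]

lemma two_of {T : Set ℝ} (h : 2 ≤ T.encard) : ∃ a b, a ∈ T ∧ b ∈ T ∧ a ≠ b := by
  obtain ⟨t, hts, htc⟩ := Set.exists_subset_encard_eq h
  rw [Set.encard_eq_two] at htc
  obtain ⟨a, b, hab, rfl⟩ := htc
  exact ⟨a, b, hts (by simp), hts (by simp), hab⟩

lemma three_of {T : Set ℝ} (h : 3 ≤ T.encard) :
    ∃ a b c, a ∈ T ∧ b ∈ T ∧ c ∈ T ∧ a ≠ b ∧ a ≠ c ∧ b ≠ c := by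
  obtain ⟨t, hts, htc⟩ := Set.exists_subset_encard_eq h
  rw [Set.encard_eq_three] at htc
  obtain ⟨a, b, c, hab, hac, hbc, rfl⟩ := htc
  exact ⟨a, b, c, hts (by simp), hts (by simp), hts (by simp), hab, hac, hbc⟩

lemma four_of {T : Set ℝ} (h : 4 ≤ T.encard) :
    ∃ a b c d, a ∈ T ∧ b ∈ T ∧ c ∈ T ∧ d ∈ T ∧
      a ≠ b ∧ a ≠ c ∧ a ≠ d ∧ b ≠ c ∧ b ≠ d ∧ c ≠ d := by
  have hne : T.Nonempty := by
    rw [← Set.encard_pos]; exact lt_of_lt_of_le (by norm_num) h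
  obtain ⟨a, ha⟩ := hne
  have h3 : 3 ≤ (T \ {a}).encard := by
    rw [Set.encard_diff_singleton_of_mem ha]
    exact ENat.le_sub_of_add_le_left (by norm_num) (le_trans (by norm_num) h)
  obtain ⟨b, c, d, hb, hc, hd, hbc, hbd, hcd⟩ := three_of h3
  exact ⟨a, b, c, d, ha, hb.1, hc.1, hd.1,
    fun e => hb.2 (by simp [← e]), fun e => hc.2 (by simp [← e]), fun e => hd.2 (by simp [← e]),
    hbc, hbd, hcd⟩

lemma first_coord_small {u3 v1 v2 v3 E1 E2 : ℝ}
    (hE1 : 300 ≤ E1) (hE2 : 30000 ≤ E2) (hE21 : 100 * E1 ≤ E2)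
    (hv2a : -1 ≤ v2) (hv2b : v2 ≤ 1) (hv3a : -1 ≤ v3) (hv3b : v3 ≤ 1)
    (hu3 : u3 ≠ 0)
    (horth : u3 * (E2 * v1 - E1 * v2 + v3) = 0) :
    -1/50 ≤ v1 ∧ v1 ≤ 1/50 := by
  have hveq : E2 * v1 - E1 * v2 + v3 = 0 := (mul_eq_zero.mp horth).resolve_left hu3
  have hpos : (0:ℝ) < E2 := by linarith
  constructor
  · have h1 : 0 ≤ E1 * (1 + v2) := mul_nonneg (by linarith) (by linarith)
    have : E2 * (-1/50) ≤ E2 * v1 := by linarith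
    exact le_of_mul_le_mul_left this hpos
  · have h1 : 0 ≤ E1 * (1 - v2) := mul_nonneg (by linarith) (by linarith)
    have : E2 * v1 ≤ E2 * (1/50) := by linarith
    exact le_of_mul_le_mul_left this hpos

/-- Bound the third coordinate of a unit vector whose cubic has two roots `≥ 100`. -/
lemma third_coord_small {v1 v2 v3 a b : ℝ} (ha : 100 ≤ a) (hb : 100 ≤ b) (hab : a ≠ b)
    (hv1a : -1/50 ≤ v1) (hv1b : v1 ≤ 1/50) (hv2a : -1 ≤ v2) (hv2b : v2 ≤ 1)
    (dv : v1 + v2 * (a + b) + v3 * (a ^ 2 + a * b + b ^ 2) = 0) :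
    -1/100 ≤ v3 ∧ v3 ≤ 1/100 := by
  have hS : 200 ≤ a + b := by linarith
  have hab1 : 0 ≤ (a - 100) * (b - 100) := mul_nonneg (by linarith) (by linarith)
  have hA : 30000 ≤ a ^ 2 + a * b + b ^ 2 := by nlinarith [sq_nonneg (a - 100), sq_nonneg (b - 100)]
  have hAS : 150 * (a + b) ≤ a ^ 2 + a * b + b ^ 2 := by
    nlinarith [sq_nonneg (a - b), mul_nonneg (by linarith : (0:ℝ) ≤ a + b - 200) (by linarith : (0:ℝ) ≤ a + b)]
  have hpos : (0:ℝ) < a ^ 2 + a * b + b ^ 2 := by linarith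
  constructor
  · have h1 : 0 ≤ (a + b) * (1 - v2) := mul_nonneg (by linarith) (by linarith)
    have : (a ^ 2 + a * b + b ^ 2) * (-1/100) ≤ (a ^ 2 + a * b + b ^ 2) * v3 := by linarith
    exact le_of_mul_le_mul_left this hpos
  · have h1 : 0 ≤ (a + b) * (1 + v2) := mul_nonneg (by linarith) (by linarith)
    have : (a ^ 2 + a * b + b ^ 2) * v3 ≤ (a ^ 2 + a * b + b ^ 2) * (1/100) := by linarith
    exact le_of_mul_le_mul_left this hpos

lemma prod_bound {m x y : ℝ} (hx : -m ≤ x) (hx' : x ≤ m) (hy : -m ≤ y) (hy' : y ≤ m) :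
    -(m * m) ≤ x * y ∧ x * y ≤ m * m := by
  constructor
  · nlinarith [mul_nonneg (by linarith : (0:ℝ) ≤ m - x) (by linarith : (0:ℝ) ≤ m + y),
      mul_nonneg (by linarith : (0:ℝ) ≤ m + x) (by linarith : (0:ℝ) ≤ m - y)]
  · nlinarith [mul_nonneg (by linarith : (0:ℝ) ≤ m - x) (by linarith : (0:ℝ) ≤ m - y),
      mul_nonneg (by linarith : (0:ℝ) ≤ m + x) (by linarith : (0:ℝ) ≤ m + y)]

lemma sq_bound {m x : ℝ} (hx : -m ≤ x) (hx' : x ≤ m) : x ^ 2 ≤ m * m := by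
  nlinarith [mul_nonneg (by linarith : (0:ℝ) ≤ m - x) (by linarith : (0:ℝ) ≤ m + x)]

lemma final_contradiction {v1 v2 v3 w1 w2 w3 : ℝ}
    (hv : v1 ^ 2 + v2 ^ 2 + v3 ^ 2 = 1) (hw : w1 ^ 2 + w2 ^ 2 + w3 ^ 2 = 1)
    (hvw : v1 * w1 + v2 * w2 + v3 * w3 = 0)
    (hv1a : -1/50 ≤ v1) (hv1b : v1 ≤ 1/50) (hv3a : -1/100 ≤ v3) (hv3b : v3 ≤ 1/100)
    (hw1a : -1/50 ≤ w1) (hw1b : w1 ≤ 1/50) (hw3a : -1/100 ≤ w3) (hw3b : w3 ≤ 1/100) :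
    False := by
  have hv1sq := sq_bound (by linarith : -(1/50 : ℝ) ≤ v1) hv1b
  have hv3sq := sq_bound (by linarith : -(1/100 : ℝ) ≤ v3) hv3b
  have hw1sq := sq_bound (by linarith : -(1/50 : ℝ) ≤ w1) hw1b
  have hw3sq := sq_bound (by linarith : -(1/100 : ℝ) ≤ w3) hw3b
  have hv2sq : 99/100 ≤ v2 ^ 2 := by norm_num at hv1sq hv3sq; linarith
  have hw2sq : 99/100 ≤ w2 ^ 2 := by norm_num at hw1sq hw3sq; linarith
  have p := prod_bound (by linarith : -(1/50 : ℝ) ≤ v1) hv1b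
    (by linarith : -(1/50 : ℝ) ≤ w1) hw1b
  have q := prod_bound (by linarith : -(1/100 : ℝ) ≤ v3) hv3b
    (by linarith : -(1/100 : ℝ) ≤ w3) hw3b
  obtain ⟨p1, p2⟩ := p
  obtain ⟨q1, q2⟩ := q
  norm_num at p1 p2 q1 q2
  have hm1 : -(1/2000 : ℝ) ≤ v2 * w2 := by linarith
  have hm2 : v2 * w2 ≤ 1/2000 := by linarith
  have hms := sq_bound hm1 hm2
  have hbig : (99/100 : ℝ) * (99/100) ≤ v2 ^ 2 * w2 ^ 2 :=
    mul_le_mul hv2sq hw2sq (by norm_num) (sq_nonneg v2)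
  have hid : v2 ^ 2 * w2 ^ 2 = (v2 * w2) ^ 2 := by ring
  norm_num at hms hbig
  linarith

lemma Ebounds {r s q : ℝ} (hr : 100 ≤ r) (hs : 100 ≤ s) (hq : 100 ≤ q) :
    300 ≤ r + s + q ∧ 30000 ≤ r * s + r * q + s * q ∧
      100 * (r + s + q) ≤ r * s + r * q + s * q := by
  have h1 : 0 ≤ (r - 100) * (s - 100) := mul_nonneg (by linarith) (by linarith)
  have h2 : 0 ≤ (r - 100) * (q - 100) := mul_nonneg (by linarith) (by linarith)
  have h3 : 0 ≤ (s - 100) * (q - 100) := mul_nonneg (by linarith) (by linarith)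
  refine ⟨by linarith, by nlinarith, by nlinarith⟩

lemma comp_bounds {x y z : ℝ} (h : x ^ 2 + y ^ 2 + z ^ 2 = 1) :
    (-1 ≤ x ∧ x ≤ 1) ∧ (-1 ≤ y ∧ y ≤ 1) ∧ (-1 ≤ z ∧ z ≤ 1) := by
  refine ⟨⟨?_, ?_⟩, ⟨?_, ?_⟩, ⟨?_, ?_⟩⟩ <;>
    nlinarith [sq_nonneg (x + 1), sq_nonneg (x - 1), sq_nonneg (y + 1), sq_nonneg (y - 1),
      sq_nonneg (z + 1), sq_nonneg (z - 1), sq_nonneg x, sq_nonneg y, sq_nonneg z]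

/-- The (3,2,2) configuration is impossible. -/
lemma no322 {u1 u2 u3 v1 v2 v3 w1 w2 w3 cu cv cw r s q a b e f : ℝ}
    (hu : u1 ^ 2 + u2 ^ 2 + u3 ^ 2 = 1) (hv : v1 ^ 2 + v2 ^ 2 + v3 ^ 2 = 1)
    (hw : w1 ^ 2 + w2 ^ 2 + w3 ^ 2 = 1)
    (huv : u1 * v1 + u2 * v2 + u3 * v3 = 0) (huw : u1 * w1 + u2 * w2 + u3 * w3 = 0)
    (hvw : v1 * w1 + v2 * w2 + v3 * w3 = 0)
    (hr : 100 ≤ r) (hs : 100 ≤ s) (hq : 100 ≤ q)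
    (hrs : r ≠ s) (hrq : r ≠ q) (hsq : s ≠ q)
    (eur : u1 * r + u2 * r ^ 2 + u3 * r ^ 3 = cu)
    (eus : u1 * s + u2 * s ^ 2 + u3 * s ^ 3 = cu)
    (euq : u1 * q + u2 * q ^ 2 + u3 * q ^ 3 = cu)
    (ha100 : 100 ≤ a) (hb100 : 100 ≤ b) (hab : a ≠ b)
    (eva : v1 * a + v2 * a ^ 2 + v3 * a ^ 3 = cv)
    (evb : v1 * b + v2 * b ^ 2 + v3 * b ^ 3 = cv)
    (he100 : 100 ≤ e) (hf100 : 100 ≤ f) (hef : e ≠ f)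
    (ewe : w1 * e + w2 * e ^ 2 + w3 * e ^ 3 = cw)
    (ewf : w1 * f + w2 * f ^ 2 + w3 * f ^ 3 = cw) : False := by
  obtain ⟨hu2, hu1⟩ := vieta hrs hrq hsq eur eus euq
  have hu3 : u3 ≠ 0 := by
    intro h; rw [h] at hu1 hu2; rw [hu1, hu2, h] at hu; norm_num at hu
  obtain ⟨hE1, hE2, hE21⟩ := Ebounds hr hs hq
  obtain ⟨⟨hv1a, hv1b⟩, ⟨hv2a, hv2b⟩, ⟨hv3a, hv3b⟩⟩ := comp_bounds hv
  obtain ⟨⟨hw1a, hw1b⟩, ⟨hw2a, hw2b⟩, ⟨hw3a, hw3b⟩⟩ := comp_bounds hw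
  rw [hu1, hu2] at huv huw
  have hov : u3 * ((r * s + r * q + s * q) * v1 - (r + s + q) * v2 + v3) = 0 := by
    linear_combination huv
  have how : u3 * ((r * s + r * q + s * q) * w1 - (r + s + q) * w2 + w3) = 0 := by
    linear_combination huw
  obtain ⟨hv1a', hv1b'⟩ := first_coord_small hE1 hE2 hE21 hv2a hv2b hv3a hv3b hu3 hov
  obtain ⟨hw1a', hw1b'⟩ := first_coord_small hE1 hE2 hE21 hw2a hw2b hw3a hw3b hu3 how
  have dv := divdiff hab eva evb
  have dw := divdiff hef ewe ewf
  obtain ⟨hv3a', hv3b'⟩ := third_coord_small ha100 hb100 hab hv1a' hv1b' hv2a hv2b dv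
  obtain ⟨hw3a', hw3b'⟩ := third_coord_small he100 hf100 hef hw1a' hw1b' hw2a hw2b dw
  exact final_contradiction hv hw hvw hv1a' hv1b' hv3a' hv3b' hw1a' hw1b' hw3a' hw3b'

end helpers

/-- There is `M > 0` such that for any three mutually orthogonal planes
`H_1, H_2, H_3` in `ℝ³`, the set `Γ = {(t, t², t³) : t ≥ M}` meets `H_1 ∪ H_2 ∪ H_3` in at
most 6 points. -/
theorem tail_meets_orthogonal_planes_in_at_most_six_points :
    ∃ M : ℝ, 0 < M ∧
      ∀ (u : Fin 3 → EuclideanSpace ℝ (Fin 3)) (c : Fin 3 → ℝ),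
        (∀ i, ‖u i‖ = 1) → (∀ i j, i ≠ j → ⟪u i, u j⟫_ℝ = 0) →
        (momentCurve3 '' Set.Ici M ∩ ⋃ i, {x | ⟪x, u i⟫_ℝ = c i}).encard ≤ 6 := by
  refine ⟨100, by norm_num, fun u c hnorm horth => ?_⟩
  have hsq : ∀ i, (u i 0) ^ 2 + (u i 1) ^ 2 + (u i 2) ^ 2 = 1 := by
    intro i
    have h := real_inner_self_eq_norm_sq (u i)
    rw [hnorm i] at h
    simp only [PiLp.inner_apply, Fin.sum_univ_three, RCLike.inner_apply, conj_trivial] at h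
    linear_combination h
  have hor : ∀ i j, i ≠ j → u i 0 * u j 0 + u i 1 * u j 1 + u i 2 * u j 2 = 0 := by
    intro i j hij
    have h := horth i j hij
    simp [PiLp.inner_apply, Fin.sum_univ_three] at h
    linear_combination h
  set T : Fin 3 → Set ℝ := fun i => {t : ℝ | 100 ≤ t ∧ ⟪momentCurve3 t, u i⟫_ℝ = c i} with hT
  have hroot : ∀ i t, t ∈ T i → u i 0 * t + u i 1 * t ^ 2 + u i 2 * t ^ 3 = c i := by
    intro i t ht
    have h : ⟪momentCurve3 t, u i⟫_ℝ = c i := ht.2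
    simp [momentCurve3, PiLp.inner_apply, Fin.sum_univ_three] at h
    linear_combination h
  have hroot100 : ∀ i t, t ∈ T i → (100:ℝ) ≤ t := fun i t ht => ht.1
  have hset : momentCurve3 '' Set.Ici (100:ℝ) ∩ ⋃ i, {x | ⟪x, u i⟫_ℝ = c i}
      = momentCurve3 '' ⋃ i, T i := by
    ext x
    constructor
    · rintro ⟨⟨t, ht, rfl⟩, hmem⟩
      rw [Set.mem_iUnion] at hmem
      obtain ⟨i, hi⟩ := hmem
      exact ⟨t, Set.mem_iUnion.mpr ⟨i, ht, hi⟩, rfl⟩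
    · rintro ⟨t, htU, rfl⟩
      rw [Set.mem_iUnion] at htU
      obtain ⟨i, hM, hc⟩ := htU
      exact ⟨⟨t, hM, rfl⟩, Set.mem_iUnion.mpr ⟨i, hc⟩⟩
  rw [hset]
  have hinj : Function.Injective momentCurve3 := by
    intro t t' h
    have h0 := congrArg (fun x => x 0) h
    simpa [momentCurve3] using h0
  rw [Set.InjOn.encard_image (hinj.injOn)]
  have key3 : ∀ i, (T i).encard ≤ 3 := by
    intro i
    by_contra hcon
    have h4 : 4 ≤ (T i).encard := by
      rw [show (4:ℕ∞) = 3 + 1 from rfl]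
      exact Order.add_one_le_of_lt (not_le.mp hcon)
    obtain ⟨t1, t2, t3, t4, h1, h2, h3', h4', d12, d13, d14, d23, d24, d34⟩ := four_of h4
    obtain ⟨hz1, hz2, hz3⟩ := four_roots d12 d13 d14 d23 d24 d34
      (hroot i t1 h1) (hroot i t2 h2) (hroot i t3 h3') (hroot i t4 h4')
    have hc := hsq i
    rw [hz1, hz2, hz3] at hc
    norm_num at hc
  have keyA : ∀ i j, i ≠ j → 3 ≤ (T i).encard → 3 ≤ (T j).encard → False := by
    intro i j hij hi hj
    obtain ⟨r, s, q, hr, hs, hq, drs, drq, dsq⟩ := three_of hi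
    obtain ⟨r', s', q', hr', hs', hq', drs', drq', dsq'⟩ := three_of hj
    exact noTwoTriples (hsq i) (hsq j) (hor i j hij)
      (hroot100 i r hr) (hroot100 i s hs) (hroot100 i q hq) drs drq dsq
      (hroot100 j r' hr') (hroot100 j s' hs') (hroot100 j q' hq') drs' drq' dsq'
      (hroot i r hr) (hroot i s hs) (hroot i q hq)
      (hroot j r' hr') (hroot j s' hs') (hroot j q' hq')
  have keyB : ∀ i j k, i ≠ j → i ≠ k → j ≠ k →
      3 ≤ (T i).encard → 2 ≤ (T j).encard → 2 ≤ (T k).encard → False := by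
    intro i j k hij hik hjk hi hj hk
    obtain ⟨r, s, q, hr, hs, hq, drs, drq, dsq⟩ := three_of hi
    obtain ⟨a, b, ha, hb, dab⟩ := two_of hj
    obtain ⟨e, f, he, hf, def'⟩ := two_of hk
    exact no322 (hsq i) (hsq j) (hsq k) (hor i j hij) (hor i k hik) (hor j k hjk)
      (hroot100 i r hr) (hroot100 i s hs) (hroot100 i q hq) drs drq dsq
      (hroot i r hr) (hroot i s hs) (hroot i q hq)
      (hroot100 j a ha) (hroot100 j b hb) dab (hroot j a ha) (hroot j b hb)
      (hroot100 k e he) (hroot100 k f hf) def' (hroot k e he) (hroot k f hf)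
  have hU : (⋃ i, T i) ⊆ T 0 ∪ T 1 ∪ T 2 := by
    refine Set.iUnion_subset fun i => ?_
    fin_cases i
    · exact fun t ht => Or.inl (Or.inl ht)
    · exact fun t ht => Or.inl (Or.inr ht)
    · exact fun t ht => Or.inr ht
  have hle : (⋃ i, T i).encard ≤ (T 0).encard + (T 1).encard + (T 2).encard :=
    le_trans (Set.encard_mono hU) (le_trans (Set.encard_union_le _ _)
      (add_le_add_left (Set.encard_union_le _ _) _))
  refine le_trans hle ?_
  have hfin : ∀ i : Fin 3, (T i).encard ≠ ⊤ :=
    fun i => ne_top_of_le_ne_top (by norm_num) (key3 i)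
  obtain ⟨m0, hm0⟩ : ∃ m : ℕ, (T 0).encard = (m : ℕ∞) := by
    lift (T 0).encard to ℕ using hfin 0 with m hm; exact ⟨m, rfl⟩
  obtain ⟨m1, hm1⟩ : ∃ m : ℕ, (T 1).encard = (m : ℕ∞) := by
    lift (T 1).encard to ℕ using hfin 1 with m hm; exact ⟨m, rfl⟩
  obtain ⟨m2, hm2⟩ : ∃ m : ℕ, (T 2).encard = (m : ℕ∞) := by
    lift (T 2).encard to ℕ using hfin 2 with m hm; exact ⟨m, rfl⟩
  have c0 : m0 ≤ 3 := by have h := key3 0; rw [hm0] at h; exact_mod_cast h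
  have c1 : m1 ≤ 3 := by have h := key3 1; rw [hm1] at h; exact_mod_cast h
  have c2 : m2 ≤ 3 := by have h := key3 2; rw [hm2] at h; exact_mod_cast h
  have A01 : ¬(3 ≤ m0 ∧ 3 ≤ m1) := by
    rintro ⟨h1, h2⟩
    exact keyA 0 1 (by decide) (by rw [hm0]; exact_mod_cast h1)
      (by rw [hm1]; exact_mod_cast h2)
  have A02 : ¬(3 ≤ m0 ∧ 3 ≤ m2) := by
    rintro ⟨h1, h2⟩
    exact keyA 0 2 (by decide) (by rw [hm0]; exact_mod_cast h1)
      (by rw [hm2]; exact_mod_cast h2)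
  have A12 : ¬(3 ≤ m1 ∧ 3 ≤ m2) := by
    rintro ⟨h1, h2⟩
    exact keyA 1 2 (by decide) (by rw [hm1]; exact_mod_cast h1)
      (by rw [hm2]; exact_mod_cast h2)
  have B0 : ¬(3 ≤ m0 ∧ 2 ≤ m1 ∧ 2 ≤ m2) := by
    rintro ⟨h1, h2, h3⟩
    exact keyB 0 1 2 (by decide) (by decide) (by decide)
      (by rw [hm0]; exact_mod_cast h1) (by rw [hm1]; exact_mod_cast h2)
      (by rw [hm2]; exact_mod_cast h3)
  have B1 : ¬(3 ≤ m1 ∧ 2 ≤ m0 ∧ 2 ≤ m2) := by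
    rintro ⟨h1, h2, h3⟩
    exact keyB 1 0 2 (by decide) (by decide) (by decide)
      (by rw [hm1]; exact_mod_cast h1) (by rw [hm0]; exact_mod_cast h2)
      (by rw [hm2]; exact_mod_cast h3)
  have B2 : ¬(3 ≤ m2 ∧ 2 ≤ m0 ∧ 2 ≤ m1) := by
    rintro ⟨h1, h2, h3⟩
    exact keyB 2 0 1 (by decide) (by decide) (by decide)
      (by rw [hm2]; exact_mod_cast h1) (by rw [hm0]; exact_mod_cast h2)
      (by rw [hm1]; exact_mod_cast h3)
  rw [hm0, hm1, hm2]
  have hsum : m0 + m1 + m2 ≤ 6 := by omega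
  exact_mod_cast hsum
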